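/- Consider the generalized equation 0 ∈ f(p, x) + T(x) with f : P × X → Y (P a metric space, X, Y normed spaces), T : X ⇉ Y, solution mapping S(p) = {x ∈ X : 0 ∈ f(p, x) + T(x)}, and let x̄ ∈ S(p̄). Suppose: (i) T is single-valued near x̄ and calm at x̄ with modulus clm T(x̄); (ii) f(·, x) is calm at p̄ uniformly with respect to x near x̄, i.e. there exist κ_p ≥ 0, ζ > 0 and ρ > 0 with ‖f(p, x) − f(p̄, x)‖ ≤ κ_p d(p, p̄) for all p ∈ B(p̄, ζ) and x ∈ B(x̄, ρ); (iii) Y is partially ordered by a convex cone Y₊ and f(p̄, ·) is Y₊-convex; (iv) 0 ∈ int ∂(y*∘f(p̄,·))(x̄) for some y* ∈ S* ∩ Y₊*, and clm T(x̄) / intrad f(p̄,·)(x̄) < 1, where intrad f(p̄,·)(x̄) = sup{ρ' > 0 : ρ'B* ⊆ ∂(y*∘f(p̄,·))(x̄) for some y* ∈ S* ∩ Y₊*}. Then S has the isolated calmness property at (p̄, x̄) and clm S(p̄, x̄) ≤ κ_p / (intrad f(p̄,·)(x̄) − clm T(x̄)). -/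

import Mathlib

open Filter Topology Metric Set ENNReal Pointwise

/-- Calmness of a set-valued map `G : P ⇉ X` at `(pb, xb) ∈ graph G`. -/
def IsCalmSV {P X : Type*} [MetricSpace P] [MetricSpace X]
    (G : P → Set X) (pb : P) (xb : X) : Prop :=
  ∃ κ : ℝ, 0 ≤ κ ∧ ∃ r : ℝ, 0 < r ∧ ∀ p ∈ Metric.closedBall pb r,
    ∀ x ∈ G p ∩ Metric.closedBall xb r,
      EMetric.infEdist x (G pb) ≤ ENNReal.ofReal (κ * dist p pb)

/-- The calmness modulus of a set-valued map `G : P ⇉ X` at `(pb, xb)`. -/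
noncomputable def clmModSV {P X : Type*} [MetricSpace P] [MetricSpace X]
    (G : P → Set X) (pb : P) (xb : X) : ℝ :=
  sInf {κ : ℝ | 0 ≤ κ ∧ ∃ r : ℝ, 0 < r ∧ ∀ p ∈ Metric.closedBall pb r,
    ∀ x ∈ G p ∩ Metric.closedBall xb r,
      EMetric.infEdist x (G pb) ≤ ENNReal.ofReal (κ * dist p pb)}

/-- Calmness modulus of a single-valued map between normed spaces at `xb`. -/
noncomputable def clmModMapN {X Y : Type*}
    [NormedAddCommGroup X] [NormedAddCommGroup Y] (t : X → Y) (xb : X) : ℝ :=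
  sInf {κ : ℝ | 0 ≤ κ ∧ ∃ r : ℝ, 0 < r ∧ ∀ x ∈ Metric.closedBall xb r,
    ‖t x - t xb‖ ≤ κ * ‖x - xb‖}

/-- The convex subdifferential of a real-valued function `ψ` at `xb`. -/
def convexSubdiffR {X : Type*} [NormedAddCommGroup X] [NormedSpace ℝ X]
    (ψ : X → ℝ) (xb : X) : Set (StrongDual ℝ X) :=
  {p | ∀ x : X, ψ xb + p (x - xb) ≤ ψ x}

/-- `intrad g(xb) = sup{ρ > 0 : ρ·B* ⊆ ∂(y*∘g)(xb) for some y* ∈ S* ∩ Y₊*}`. -/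
noncomputable def intrad {X Y : Type*}
    [NormedAddCommGroup X] [NormedSpace ℝ X] [NormedAddCommGroup Y] [NormedSpace ℝ Y]
    (C : Set Y) (g : X → Y) (xb : X) : ℝ :=
  sSup {ρ : ℝ | 0 < ρ ∧ ∃ q : StrongDual ℝ Y, ‖q‖ = 1 ∧ (∀ y ∈ C, 0 ≤ q y) ∧
    ∀ p : StrongDual ℝ X, ‖p‖ ≤ ρ → p ∈ convexSubdiffR (fun x => q (g x)) xb}


set_option synthInstance.maxHeartbeats 1000000 in
set_option maxHeartbeats 1000000 in
lemma aux_growth {X : Type*} [NormedAddCommGroup X] [NormedSpace ℝ X]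
    (ψ : X → ℝ) (xb : X) (ρ : ℝ) (hρ : 0 ≤ ρ)
    (h : ∀ p : StrongDual ℝ X, ‖p‖ ≤ ρ → p ∈ convexSubdiffR ψ xb)
    (x : X) : ψ xb + ρ * ‖x - xb‖ ≤ ψ x := by
  rcases eq_or_ne x xb with rfl | hx
  · simpa using h 0 (by simpa using hρ) xb
  · obtain ⟨g, hg1, hgx⟩ := exists_dual_vector ℝ (x - xb) (norm_ne_zero_iff.mpr (sub_ne_zero.mpr hx))
    have hp : ‖ρ • g‖ ≤ ρ := by
      rw [show ‖ρ • g‖ = ‖ρ‖ * ‖g‖ from norm_smul ρ g, hg1, mul_one, Real.norm_eq_abs, abs_of_nonneg hρ]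
    have := h (ρ • g) hp x
    simpa [ContinuousLinearMap.smul_apply, hgx] using this

set_option maxHeartbeats 2000000 in

/-- Isolated calmness via scalarization for the solution mapping
`S(p) = {x : 0 ∈ f(p, x) + T(x)}` of a generalized equation whose field `T` is
single-valued and calm near `xb`, and whose base `f(pb, ·)` is `Y₊`-convex with
`0 ∈ int ∂(y*∘f(pb,·))(xb)` for some `y* ∈ S* ∩ Y₊*` and
`clm T(xb)/intrad f(pb,·)(xb) < 1`; with the corresponding modulus estimate. -/
theorem isolated_calmness_of_solution_mapping_scalarized {P X Y : Type*} [MetricSpace P]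
    [NormedAddCommGroup X] [NormedSpace ℝ X] [NormedAddCommGroup Y] [NormedSpace ℝ Y]
    (f : P × X → Y) (T : X → Set Y) (pb : P) (xb : X)
    (S : P → Set X) (hS : S = fun p => {x | (0 : Y) ∈ ({f (p, x)} : Set Y) + T x})
    (hsol : xb ∈ S pb)
    -- (i) T single-valued near xb, calm at xb
    (t : X → Y) (ρ₀ : ℝ) (hρ₀ : 0 < ρ₀)
    (hT : ∀ x ∈ Metric.closedBall xb ρ₀, T x = {t x})
    (htcalm : ∃ κ : ℝ, 0 ≤ κ ∧ ∃ r : ℝ, 0 < r ∧ ∀ x ∈ Metric.closedBall xb r,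
      ‖t x - t xb‖ ≤ κ * ‖x - xb‖)
    -- (ii) calmness of f(·, x) at pb, uniformly in x near xb
    (κp : ℝ) (hκp : 0 ≤ κp) (ζ : ℝ) (hζ : 0 < ζ) (ρ : ℝ) (hρ : 0 < ρ)
    (hfp : ∀ p ∈ Metric.closedBall pb ζ, ∀ x ∈ Metric.closedBall xb ρ,
      ‖f (p, x) - f (pb, x)‖ ≤ κp * dist p pb)
    -- (iii) Y partially ordered by a convex cone C and f(pb, ·) is C-convex
    (C : Set Y) (hCconv : Convex ℝ C) (hCcone : ∀ c : ℝ, 0 < c → ∀ y ∈ C, c • y ∈ C)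
    (hfconv : ∀ x₁ x₂ : X, ∀ s : ℝ, 0 ≤ s → s ≤ 1 →
      s • f (pb, x₁) + (1 - s) • f (pb, x₂) - f (pb, s • x₁ + (1 - s) • x₂) ∈ C)
    -- (iv) scalarized interiority and smallness conditions
    (hq : ∃ q : StrongDual ℝ Y, ‖q‖ = 1 ∧ (∀ y ∈ C, 0 ≤ q y) ∧
      (0 : StrongDual ℝ X) ∈
        interior (convexSubdiffR (fun x => q (f (pb, x))) xb))
    (hlt : clmModMapN t xb / intrad C (fun x => f (pb, x)) xb < 1) :
    (IsCalmSV S pb xb ∧ ∃ ρ' : ℝ, 0 < ρ' ∧ S pb ∩ Metric.closedBall xb ρ' ⊆ {xb}) ∧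
    clmModSV S pb xb ≤
      κp / (intrad C (fun x => f (pb, x)) xb - clmModMapN t xb) := by
  
  classical
  -- the three relevant sets
  set Sset : Set ℝ := {ρ' : ℝ | 0 < ρ' ∧ ∃ q : StrongDual ℝ Y, ‖q‖ = 1 ∧
      (∀ y ∈ C, 0 ≤ q y) ∧ ∀ p : StrongDual ℝ X, ‖p‖ ≤ ρ' →
        p ∈ convexSubdiffR (fun x => q (f (pb, x))) xb} with hSset
  set Tset : Set ℝ := {κ : ℝ | 0 ≤ κ ∧ ∃ r : ℝ, 0 < r ∧ ∀ x ∈ Metric.closedBall xb r,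
      ‖t x - t xb‖ ≤ κ * ‖x - xb‖} with hTset
  set Cset : Set ℝ := {κ : ℝ | 0 ≤ κ ∧ ∃ r : ℝ, 0 < r ∧ ∀ p ∈ Metric.closedBall pb r,
      ∀ x ∈ S p ∩ Metric.closedBall xb r,
        EMetric.infEdist x (S pb) ≤ ENNReal.ofReal (κ * dist p pb)} with hCset
  have hRdef : intrad C (fun x => f (pb, x)) xb = sSup Sset := rfl
  have hTdef : clmModMapN t xb = sInf Tset := rfl
  have hCdef : clmModSV S pb xb = sInf Cset := rfl
  have hTne : Tset.Nonempty := htcalm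
  have hTbdd : BddBelow Tset := ⟨0, fun κ hκ => hκ.1⟩
  have hCbdd : BddBelow Cset := ⟨0, fun κ hκ => hκ.1⟩
  -- solution membership means the equation holds (near xb)
  have hmemS : ∀ p : P, ∀ x ∈ Metric.closedBall xb ρ₀, x ∈ S p → f (p, x) + t x = 0 := by
    intro p x hx hxS
    rw [hS] at hxS
    simp only [Set.mem_setOf_eq, hT x hx, Set.singleton_add_singleton,
      Set.mem_singleton_iff] at hxS
    exact hxS.symm
  have heqb : f (pb, xb) + t xb = 0 :=
    hmemS pb xb (Metric.mem_closedBall_self hρ₀.le) hsol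
  -- main pointwise estimate
  have key : ∀ ρ' ∈ Sset, ∀ κt ∈ Tset, κt < ρ' →
      ∃ r : ℝ, 0 < r ∧ ∀ p ∈ Metric.closedBall pb r, ∀ x ∈ S p ∩ Metric.closedBall xb r,
        ‖x - xb‖ * (ρ' - κt) ≤ κp * dist p pb := by
    rintro ρ' ⟨hρ'pos, q, hq1, hq2, hq3⟩ κt ⟨hκt0, rt, hrt, hcalm⟩ hlt'
    refine ⟨min (min ρ₀ ρ) (min ζ rt), by positivity, ?_⟩
    rintro p hp x ⟨hxS, hxB⟩
    have hxB' : dist x xb ≤ min (min ρ₀ ρ) (min ζ rt) := hxB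
    have hx0 : x ∈ Metric.closedBall xb ρ₀ :=
      Metric.mem_closedBall.2 (hxB'.trans ((min_le_left _ _).trans (min_le_left _ _)))
    have hxρ : x ∈ Metric.closedBall xb ρ :=
      Metric.mem_closedBall.2 (hxB'.trans ((min_le_left _ _).trans (min_le_right _ _)))
    have hxrt : x ∈ Metric.closedBall xb rt :=
      Metric.mem_closedBall.2 (hxB'.trans ((min_le_right _ _).trans (min_le_right _ _)))
    have hpζ : p ∈ Metric.closedBall pb ζ :=
      Metric.mem_closedBall.2 ((Metric.mem_closedBall.1 hp).trans
        ((min_le_right _ _).trans (min_le_left _ _)))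
    have heq : f (p, x) + t x = 0 := hmemS p x hx0 hxS
    -- growth from subdifferential containment
    have hgrow := aux_growth (fun x => q (f (pb, x))) xb ρ' hρ'pos.le hq3 x
    -- upper estimate
    have hsplit : f (pb, x) - f (pb, xb) = (f (pb, x) - f (p, x)) + (t xb - t x) := by
      have h1 : f (p, x) = -t x := by linear_combination (norm := abel) heq
      have h2 : f (pb, xb) = -t xb := by linear_combination (norm := abel) heqb
      rw [h1, h2]; abel
    have hqle : q (f (pb, x)) - q (f (pb, xb)) ≤ κp * dist p pb + κt * ‖x - xb‖ := by
      have e1 : q (f (pb, x)) - q (f (pb, xb)) =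
          q (f (pb, x) - f (p, x)) + q (t xb - t x) := by
        rw [← map_sub, ← map_add, ← hsplit, map_sub]
      have b1 : q (f (pb, x) - f (p, x)) ≤ ‖f (pb, x) - f (p, x)‖ := by
        calc q (f (pb, x) - f (p, x)) ≤ ‖q (f (pb, x) - f (p, x))‖ := le_abs_self _
          _ ≤ ‖q‖ * ‖f (pb, x) - f (p, x)‖ := q.le_opNorm _
          _ = ‖f (pb, x) - f (p, x)‖ := by rw [hq1, one_mul]
      have b2 : q (t xb - t x) ≤ ‖t x - t xb‖ := by
        calc q (t xb - t x) ≤ ‖q (t xb - t x)‖ := le_abs_self _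
          _ ≤ ‖q‖ * ‖t xb - t x‖ := q.le_opNorm _
          _ = ‖t x - t xb‖ := by rw [hq1, one_mul, norm_sub_rev]
      have b1' : ‖f (pb, x) - f (p, x)‖ ≤ κp * dist p pb := by
        rw [norm_sub_rev]; exact hfp p hpζ x hxρ
      have b2' : ‖t x - t xb‖ ≤ κt * ‖x - xb‖ := hcalm x hxrt
      linarith [e1, b1, b2, b1', b2']
    nlinarith [hgrow, hqle]
  -- derive calmness constant membership
  have hCmem : ∀ ρ' ∈ Sset, ∀ κt ∈ Tset, κt < ρ' → κp / (ρ' - κt) ∈ Cset := by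
    intro ρ' hρ' κt hκt hlt'
    obtain ⟨r, hr, hest⟩ := key ρ' hρ' κt hκt hlt'
    have hd : (0:ℝ) < ρ' - κt := sub_pos.2 hlt'
    refine ⟨div_nonneg hκp hd.le, r, hr, ?_⟩
    intro p hp x hx
    have h1 := hest p hp x hx
    have h2 : ‖x - xb‖ ≤ κp / (ρ' - κt) * dist p pb := by
      rw [div_mul_eq_mul_div, le_div_iff₀ hd]
      linarith [h1]
    calc EMetric.infEdist x (S pb) ≤ edist x xb :=
          EMetric.infEdist_le_edist_of_mem hsol
      _ = ENNReal.ofReal (dist x xb) := by rw [edist_dist]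
      _ ≤ ENNReal.ofReal (κp / (ρ' - κt) * dist p pb) := by
          apply ENNReal.ofReal_le_ofReal
          rw [dist_eq_norm]; exact h2
  by_cases hbdd : BddAbove Sset
  · -- main case
    -- Sset is nonempty with a positive element
    obtain ⟨q, hq1, hq2, hq3⟩ := hq
    obtain ⟨ε, hε, hball⟩ := Metric.mem_nhds_iff.1 (mem_interior_iff_mem_nhds.1 hq3)
    have hSmem : ε / 2 ∈ Sset := by
      refine ⟨by positivity, q, hq1, hq2, fun p hp => hball ?_⟩
      rw [Metric.mem_ball, dist_zero_right]
      linarith [hp]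
    have hSne : Sset.Nonempty := ⟨ε / 2, hSmem⟩
    have hRpos : 0 < sSup Sset := lt_of_lt_of_le (by positivity) (le_csSup hbdd hSmem)
    rw [hRdef, hTdef] at hlt
    have hTltR : sInf Tset < sSup Sset := (div_lt_one hRpos).1 hlt
    set A : ℝ := sSup Sset - sInf Tset with hA
    have hApos : 0 < A := sub_pos.2 hTltR
    -- isolated calmness with one fixed pair
    obtain ⟨ρ'0, hρ'0S, hρ'0gt⟩ := exists_lt_of_lt_csSup hSne hTltR
    obtain ⟨κt0, hκt0T, hκt0lt⟩ := exists_lt_of_csInf_lt hTne hρ'0gt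
    obtain ⟨r0, hr0, hest0⟩ := key ρ'0 hρ'0S κt0 hκt0T hκt0lt
    have hfirst : IsCalmSV S pb xb ∧ ∃ ρ' : ℝ, 0 < ρ' ∧
        S pb ∩ Metric.closedBall xb ρ' ⊆ {xb} := by
      constructor
      · exact ⟨κp / (ρ'0 - κt0), hCmem ρ'0 hρ'0S κt0 hκt0T hκt0lt⟩
      · refine ⟨r0, hr0, ?_⟩
        rintro x ⟨hxS, hxB⟩
        have := hest0 pb (Metric.mem_closedBall_self hr0.le) x ⟨hxS, hxB⟩
        rw [dist_self, mul_zero] at this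
        have hx0 : ‖x - xb‖ = 0 := by nlinarith [norm_nonneg (x - xb), sub_pos.2 hκt0lt]
        have : x = xb := by
          rwa [norm_eq_zero, sub_eq_zero] at hx0
        simp [this]
    refine ⟨hfirst, ?_⟩
    rw [hCdef, hRdef, hTdef, ← hA]
    -- modulus estimate via approximation
    have hseq : ∀ n : ℕ, sInf Cset ≤ κp / (A - A / (n + 2)) := by
      intro n
      have hn2 : (0:ℝ) < (n:ℝ) + 2 := by positivity
      have hεpos : 0 < A / ((n:ℝ) + 2) := div_pos hApos hn2
      have hεlt : A / ((n:ℝ) + 2) < A := by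
        rw [div_lt_iff₀ hn2]; nlinarith [hApos]
      set δ : ℝ := A / ((n:ℝ) + 2) / 2 with hδ
      have hδpos : 0 < δ := by positivity
      obtain ⟨ρ', hρ'S, hρ'gt⟩ := exists_lt_of_lt_csSup hSne
        (show sSup Sset - δ < sSup Sset by linarith)
      obtain ⟨κt, hκtT, hκtlt⟩ := exists_lt_of_csInf_lt hTne
        (show sInf Tset < sInf Tset + δ by linarith)
      have h1 : κt < ρ' := by
        have : A - A / ((n:ℝ) + 2) = A - 2 * δ := by rw [hδ]; ring
        linarith
      have h2 : A - A / ((n:ℝ) + 2) ≤ ρ' - κt := by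
        have : A - A / ((n:ℝ) + 2) = A - 2 * δ := by rw [hδ]; ring
        linarith
      have hden : (0:ℝ) < A - A / ((n:ℝ) + 2) := by linarith
      calc sInf Cset ≤ κp / (ρ' - κt) := csInf_le hCbdd (hCmem ρ' hρ'S κt hκtT h1)
        _ ≤ κp / (A - A / ((n:ℝ) + 2)) := by gcongr
    have htend : Tendsto (fun n : ℕ => κp / (A - A / ((n:ℝ) + 2))) atTop (𝓝 (κp / A)) := by
      have h1 : Tendsto (fun n : ℕ => A / ((n:ℝ) + 2)) atTop (𝓝 0) :=
        Tendsto.div_atTop tendsto_const_nhds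
          (tendsto_atTop_add_const_right _ 2 tendsto_natCast_atTop_atTop)
      have h2 : Tendsto (fun n : ℕ => A - A / ((n:ℝ) + 2)) atTop (𝓝 A) := by
        simpa using tendsto_const_nhds.sub h1
      exact tendsto_const_nhds.div h2 hApos.ne'
    exact ge_of_tendsto htend (Filter.Eventually.of_forall hseq)
  · -- degenerate case: Sset unbounded above forces X to be a single point
    have hxall : ∀ x : X, x = xb := by
      intro x
      by_contra hx
      have hn : 0 < ‖x - xb‖ := by
        rw [norm_pos_iff, sub_ne_zero]; exact hx
      obtain ⟨ρ', hρ'S, hρ'gt⟩ := (not_bddAbove_iff.1 hbdd)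
        (‖f (pb, x) - f (pb, xb)‖ / ‖x - xb‖)
      obtain ⟨hρ'pos, q, hq1, hq2, hq3⟩ := hρ'S
      have hgrow := aux_growth (fun x => q (f (pb, x))) xb ρ' hρ'pos.le hq3 x
      have hb : q (f (pb, x)) - q (f (pb, xb)) ≤ ‖f (pb, x) - f (pb, xb)‖ := by
        calc q (f (pb, x)) - q (f (pb, xb)) = q (f (pb, x) - f (pb, xb)) := by rw [map_sub]
          _ ≤ ‖q (f (pb, x) - f (pb, xb))‖ := le_abs_self _
          _ ≤ ‖q‖ * ‖f (pb, x) - f (pb, xb)‖ := q.le_opNorm _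
          _ = ‖f (pb, x) - f (pb, xb)‖ := by rw [hq1, one_mul]
      have hgt : ‖f (pb, x) - f (pb, xb)‖ < ρ' * ‖x - xb‖ := by
        rw [← div_lt_iff₀ hn] at *
        exact hρ'gt
      linarith
    have hT0 : (0:ℝ) ∈ Tset := by
      refine ⟨le_refl 0, 1, one_pos, fun x _ => ?_⟩
      rw [hxall x]; simp
    have hTeq : sInf Tset = 0 :=
      le_antisymm (csInf_le hTbdd hT0) (le_csInf hTne fun κ hκ => hκ.1)
    have hC0 : (0:ℝ) ∈ Cset := by
      refine ⟨le_refl 0, 1, one_pos, fun p _ x hx => ?_⟩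
      rw [hxall x]
      exact (le_of_eq (EMetric.infEdist_zero_of_mem hsol)).trans zero_le
    have hReq : sSup Sset = 0 := Real.sSup_of_not_bddAbove hbdd
    constructor
    · constructor
      · exact ⟨0, hC0⟩
      · exact ⟨1, one_pos, fun x hx => by simp [hxall x]⟩
    · rw [hCdef, hRdef, hTdef, hReq, hTeq]
      simpa using csInf_le hCbdd hC0
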